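/- Let $a : \mathbb{Z} \to \mathbb{C}$ satisfy $|a_\nu| \le C\, m(\nu)$ where $m$ is positive, even, and $(1+|\nu|)m(\nu) \in \ell^1$. Let $P_N$ be the $N \times N$ Toeplitz matrix with entries $P_N(j,k) = a^N_{j-k}$ ($a^N_\nu = 1_{[-N,N]}(\nu) a_\nu$), and let $\widetilde{P}_N$ be the matrix indexed by $I_N = [0,N) \subset \mathbb{Z}/(N+M)\mathbb{Z}$ with entries $\widetilde{P}_N(j,k) = \sum_{\nu \equiv j-k \bmod (N+M)} a^N_\nu$. Then the trace-class (nuclear) norm satisfies $\|P_N - \widetilde{P}_N\|_{\mathrm{tr}} \le 2C \sum_{k=M}^{\infty} (k+1-M) m(k)$, uniformly in $N$. -/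

import Mathlib

open scoped Matrix.Norms.L2Operator

/-- The trace (nuclear) norm of a square complex matrix: the sum of its singular
values, i.e. of the square roots of the eigenvalues of `Aᴴ * A`. -/
noncomputable def traceNorm {n : ℕ} (A : Matrix (Fin n) (Fin n) ℂ) : ℝ :=
  ∑ i, Real.sqrt ((Matrix.isHermitian_conjTranspose_mul_self A).eigenvalues i)

open Matrix Finset in
/-- The trace norm is at most the sum of the absolute values of the entries. -/
lemma traceNorm_le_sum_norm {n : ℕ} (A : Matrix (Fin n) (Fin n) ℂ) :
    traceNorm A ≤ ∑ j, ∑ k, ‖A j k‖ := by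
  classical
  set hH := Matrix.isHermitian_conjTranspose_mul_self A with hHdef
  set μ : Fin n → ℝ := hH.eigenvalues with hμ
  set w : Fin n → EuclideanSpace ℂ (Fin n) := fun i => hH.eigenvectorBasis i with hw
  set u : Fin n → EuclideanSpace ℂ (Fin n) :=
    fun i => (WithLp.equiv 2 (Fin n → ℂ)).symm (A *ᵥ (WithLp.equiv 2 _ (w i))) with hu
  have hworth : Orthonormal ℂ w := hH.eigenvectorBasis.orthonormal
  have huu : ∀ i j, (inner ℂ (u i) (u j) : ℂ) = (μ j : ℂ) * inner ℂ (w i) (w j) := by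
    intro i j
    rw [hu]
    simp only [WithLp.equiv_symm_apply]
    rw [EuclideanSpace.inner_toLp_toLp, EuclideanSpace.inner_eq_star_dotProduct,
      star_mulVec, dotProduct_comm, dotProduct_mulVec, vecMul_vecMul, ← dotProduct_mulVec]
    have h1 : (Aᴴ * A) *ᵥ (WithLp.equiv 2 _ (w j)) = (μ j) • (WithLp.equiv 2 _ (w j)) :=
      hH.mulVec_eigenvectorBasis j
    rw [h1, dotProduct_smul]
    simp [Complex.real_smul, dotProduct_comm]
  have huu' : ∀ i j, i ≠ j → (inner ℂ (u i) (u j) : ℂ) = 0 := by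
    intro i j hij
    rw [huu, hworth.2 hij, mul_zero]
  have hnorm_u : ∀ i, ‖u i‖ = Real.sqrt (μ i) := by
    intro i
    have h1 : (inner ℂ (u i) (u i) : ℂ) = (μ i : ℂ) := by
      rw [huu, inner_self_eq_norm_sq_to_K, hworth.1 i]
      norm_num
    have h2 : (inner ℂ (u i) (u i) : ℂ) = ((‖u i‖ : ℂ))^2 := inner_self_eq_norm_sq_to_K (u i)
    have h3 : μ i = ‖u i‖ ^ 2 := by
      have := h1.symm.trans h2
      exact_mod_cast this
    rw [h3, Real.sqrt_sq (norm_nonneg _)]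
  -- the left singular vectors
  set v : Fin n → EuclideanSpace ℂ (Fin n) := fun i => (‖u i‖⁻¹ : ℝ) • u i with hv
  have hvu : ∀ i, (inner ℂ (v i) (u i) : ℂ) = (‖u i‖ : ℂ) := by
    intro i
    rcases eq_or_ne (u i) 0 with h | h
    · simp [hv, h]
    · show (inner ℂ ((‖u i‖⁻¹ : ℝ) • u i) (u i) : ℂ) = _
      rw [RCLike.real_smul_eq_coe_smul (K := ℂ), inner_smul_real_left, inner_self_eq_norm_sq_to_K]
      have : (‖u i‖ : ℝ) ≠ 0 := norm_ne_zero_iff.mpr h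
      have hc : ((‖u i‖ : ℝ) : ℂ) ≠ 0 := Complex.ofReal_ne_zero.mpr this
      push_cast [Complex.real_smul]
      field_simp
      norm_cast
  -- trace norm as a sum of inner products
  have key : traceNorm A = (∑ i, (inner ℂ (v i) (u i) : ℂ)).re := by
    rw [traceNorm]
    rw [Complex.re_sum]
    refine Finset.sum_congr rfl fun i _ => ?_
    rw [hvu, ← hnorm_u i]
    simp
  -- coordinate vectors
  set x : Fin n → EuclideanSpace ℂ (Fin n) :=
    fun j => (WithLp.equiv 2 (Fin n → ℂ)).symm (fun i => (WithLp.equiv 2 _ (v i)) j) with hx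
  set y : Fin n → EuclideanSpace ℂ (Fin n) :=
    fun k => (WithLp.equiv 2 (Fin n → ℂ)).symm (fun i => (WithLp.equiv 2 _ (w i)) k) with hy
  have expand : (∑ i, (inner ℂ (v i) (u i) : ℂ)) = ∑ j, ∑ k, A j k * inner ℂ (x j) (y k) := by
    simp only [PiLp.inner_apply, RCLike.inner_apply, hx, hy, hu, hv,
      WithLp.equiv_symm_apply, WithLp.equiv_apply, PiLp.smul_apply,
      Matrix.mulVec, dotProduct, Finset.mul_sum, Finset.sum_mul]
    rw [Finset.sum_comm]
    refine Finset.sum_congr rfl fun j _ => ?_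
    rw [Finset.sum_comm]
    exact Finset.sum_congr rfl fun k _ => Finset.sum_congr rfl fun i _ => by ring
  have hyle : ∀ k, ‖y k‖ ≤ 1 := by
    intro k
    have hb := hworth.sum_inner_products_le (s := Finset.univ)
      (EuclideanSpace.single k (1 : ℂ))
    simp only [EuclideanSpace.inner_single_right, one_mul, norm_mul, RCLike.norm_conj,
      EuclideanSpace.norm_single, norm_one, one_pow] at hb
    have h2 : ‖y k‖ ^ 2 ≤ 1 := by
      rw [EuclideanSpace.norm_eq, Real.sq_sqrt (by positivity)]
      refine le_trans (le_of_eq (Finset.sum_congr rfl fun i _ => ?_)) hb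
      simp [hy]
    nlinarith [norm_nonneg (y k)]
  have hvv : ∀ i j : Fin n, i ≠ j → (inner ℂ (v i) (v j) : ℂ) = 0 := by
    intro i j hij
    show (inner ℂ ((‖u i‖⁻¹ : ℝ) • u i) ((‖u j‖⁻¹ : ℝ) • u j) : ℂ) = 0
    rw [RCLike.real_smul_eq_coe_smul (K := ℂ), RCLike.real_smul_eq_coe_smul (K := ℂ),
      inner_smul_left, inner_smul_right, huu' i j hij, mul_zero, mul_zero]
  have hvzero : ∀ i : Fin n, u i = 0 → v i = 0 := by
    intro i h; rw [hv]; simp [h]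
  have hxle : ∀ j, ‖x j‖ ≤ 1 := by
    intro j
    have hvorth : Orthonormal ℂ (fun i : {i : Fin n // u i ≠ 0} => v i) := by
      constructor
      · intro i
        show ‖(‖u (i : Fin n)‖⁻¹ : ℝ) • u (i : Fin n)‖ = 1
        rw [norm_smul]
        simp [norm_ne_zero_iff.mpr i.2]
      · intro i j hij
        exact hvv i j (fun h => hij (Subtype.ext h))
    have hb := hvorth.sum_inner_products_le (s := Finset.univ)
      (EuclideanSpace.single j (1 : ℂ))
    simp only [EuclideanSpace.inner_single_right, one_mul, norm_mul, RCLike.norm_conj,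
      EuclideanSpace.norm_single, norm_one, one_pow] at hb
    have h2 : ‖x j‖ ^ 2 ≤ 1 := by
      rw [EuclideanSpace.norm_eq, Real.sq_sqrt (by positivity)]
      have e1 : ∑ i : Fin n, ‖(x j : EuclideanSpace ℂ (Fin n)) i‖ ^ 2
          = ∑ i : Fin n, ‖(v i : EuclideanSpace ℂ (Fin n)) j‖ ^ 2 :=
        Finset.sum_congr rfl fun i _ => by simp [hx]
      have e2 : ∑ i : Fin n, ‖(v i : EuclideanSpace ℂ (Fin n)) j‖ ^ 2
          = ∑ i : {i : Fin n // u i ≠ 0}, ‖(v (i : Fin n) : EuclideanSpace ℂ (Fin n)) j‖ ^ 2 := by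
        rw [← Finset.sum_filter_of_ne (p := fun i => u i ≠ 0)
          (fun i _ hne => by
            intro h0
            rw [hvzero i h0] at hne
            simp at hne)]
        rw [Finset.sum_subtype (p := fun i => u i ≠ 0) (Finset.univ.filter (fun i => u i ≠ 0))
          (by simp) (fun i => ‖(v i : EuclideanSpace ℂ (Fin n)) j‖ ^ 2)]
      rw [e1, e2]
      exact hb
    nlinarith [norm_nonneg (x j)]
  rw [key, expand]
  calc (∑ j, ∑ k, A j k * (inner ℂ (x j) (y k) : ℂ)).re
      ≤ ‖∑ j, ∑ k, A j k * (inner ℂ (x j) (y k) : ℂ)‖ := by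
        exact Complex.re_le_norm _
    _ ≤ ∑ j, ∑ k, ‖A j k * (inner ℂ (x j) (y k) : ℂ)‖ :=
        le_trans (norm_sum_le _ _) (Finset.sum_le_sum fun j _ => norm_sum_le _ _)
    _ ≤ ∑ j, ∑ k, ‖A j k‖ := by
        refine Finset.sum_le_sum fun j _ => Finset.sum_le_sum fun k _ => ?_
        rw [norm_mul]
        refine mul_le_of_le_one_right (norm_nonneg _) ?_
        refine le_trans (norm_inner_le_norm _ _) ?_
        exact mul_le_one₀ (hxle j) (norm_nonneg _) (hyle k)

/-- Evaluation of the periodization sum for a truncated sequence. -/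
lemma aux_tsum_eval (N M : ℕ) (hM : 1 ≤ M) (aN : ℤ → ℂ) (d : ℤ)
    (hd1 : -(N:ℤ) < d) (hd2 : d < (N:ℤ))
    (haN0 : ∀ ν : ℤ, ¬ |ν| ≤ (N:ℤ) → aN ν = 0) :
    (∑' ν : ℤ, if (ν : ZMod (N + M)) = ((d : ℤ) : ZMod (N + M)) then aN ν else 0)
      = aN (d - ((N:ℤ)+M)) + aN d + aN (d + ((N:ℤ)+M)) := by
  classical
  set T : ℤ := (N:ℤ) + M with hT
  have hTpos : 0 < T := by omega
  have hs : ∀ ν ∉ ({d - T, d, d + T} : Finset ℤ),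
      (if (ν : ZMod (N + M)) = ((d : ℤ) : ZMod (N + M)) then aN ν else 0) = 0 := by
    intro ν hν
    simp only [Finset.mem_insert, Finset.mem_singleton, not_or] at hν
    split_ifs with hc
    · rcases le_or_gt (|ν|) (N:ℤ) with hle | hgt
      · exfalso
        have hdvd : ((N + M : ℕ) : ℤ) ∣ (ν - d) := by
          rw [← ZMod.intCast_zmod_eq_zero_iff_dvd]
          push_cast
          rw [hc]; ring
        obtain ⟨t, ht⟩ := hdvd
        have hcast : ((N + M : ℕ) : ℤ) = T := by push_cast [hT]; ring
        rw [hcast] at ht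
        have hub : T * t < T * 2 := by
          have : ν - d < 2 * T := by
            rcases abs_le.mp hle with ⟨h1, h2⟩; omega
          omega
        have hlb : T * (-2) < T * t := by
          have : -(2 * T) < ν - d := by
            rcases abs_le.mp hle with ⟨h1, h2⟩; omega
          omega
        have ht2 : t < 2 := lt_of_mul_lt_mul_left hub (le_of_lt hTpos)
        have ht3 : -2 < t := lt_of_mul_lt_mul_left hlb (le_of_lt hTpos)
        interval_cases t <;> omega
      · exact haN0 ν (by omega)
    · rfl
  rw [tsum_eq_sum hs]
  have h1 : d - T ∉ ({d, d + T} : Finset ℤ) := by simp; omega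
  have h2 : d ∉ ({d + T} : Finset ℤ) := by simp; omega
  rw [show ({d - T, d, d + T} : Finset ℤ) = insert (d - T) (insert d {d + T}) from rfl,
    Finset.sum_insert h1, Finset.sum_insert h2, Finset.sum_singleton]
  have hcast : ((N + M : ℕ) : ℤ) = T := by push_cast [hT]; ring
  have hT0 : ((T : ℤ) : ZMod (N + M)) = 0 := by
    rw [← hcast]
    rw [Int.cast_natCast]
    exact ZMod.natCast_self _
  have e1 : ((d - T : ℤ) : ZMod (N + M)) = ((d : ℤ) : ZMod (N + M)) := by
    rw [Int.cast_sub, hT0, sub_zero]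
  have e2 : ((d + T : ℤ) : ZMod (N + M)) = ((d : ℤ) : ZMod (N + M)) := by
    rw [Int.cast_add, hT0, add_zero]
  rw [if_pos e1, if_pos rfl, if_pos e2]
  ring

/-- The key combinatorial bound on the Toeplitz double sum. -/
lemma aux_sum_bound (N M : ℕ) (m : ℤ → ℝ) (hm_pos : ∀ ν, 0 < m ν)
    (hsum : Summable fun n : ℕ => ((n:ℝ)+1) * m ((M:ℤ) + n)) :
    ∑ j : Fin N, ∑ k : Fin N, m ((j:ℤ) - (k:ℤ) + ((N:ℤ)+M))
      ≤ ∑' n : ℕ, ((n:ℝ)+1) * m ((M:ℤ)+n) := by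
  classical
  set F : Fin N × Fin N → ℕ := fun p => (p.1 : ℕ) + N - (p.2 : ℕ) with hF
  have hval : ∀ p : Fin N × Fin N,
      m ((p.1:ℤ) - (p.2:ℤ) + ((N:ℤ)+M)) = m ((M:ℤ) + (F p : ℕ)) := by
    intro p
    congr 1
    have h2 : (p.2 : ℕ) < N := p.2.2
    have h1 : (p.1 : ℕ) < N := p.1.2
    rw [hF]
    push_cast [Nat.cast_sub (by omega : (p.2 : ℕ) ≤ (p.1 : ℕ) + N)]
    omega
  rw [show (∑ j : Fin N, ∑ k : Fin N, m ((j:ℤ) - (k:ℤ) + ((N:ℤ)+M)))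
      = ∑ p : Fin N × Fin N, m ((p.1:ℤ) - (p.2:ℤ) + ((N:ℤ)+M)) from
    (Fintype.sum_prod_type (f := fun p : Fin N × Fin N =>
      m ((p.1:ℤ) - (p.2:ℤ) + ((N:ℤ)+M)))).symm]
  calc ∑ p : Fin N × Fin N, m ((p.1:ℤ) - (p.2:ℤ) + ((N:ℤ)+M))
      = ∑ p : Fin N × Fin N, m ((M:ℤ) + (F p : ℕ)) := Finset.sum_congr rfl fun p _ => hval p
    _ = ∑ n ∈ Finset.univ.image F,
          (Finset.univ.filter fun p => F p = n).card • m ((M:ℤ) + (n : ℕ)) :=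
        Finset.sum_comp (fun n : ℕ => m ((M:ℤ) + (n:ℕ))) F
    _ ≤ ∑ n ∈ Finset.univ.image F, ((n:ℝ)+1) * m ((M:ℤ) + (n : ℕ)) := by
        refine Finset.sum_le_sum fun n hn => ?_
        rw [nsmul_eq_mul]
        refine mul_le_mul_of_nonneg_right ?_ (le_of_lt (hm_pos _))
        have hcard : (Finset.univ.filter fun p => F p = n).card ≤ n + 1 := by
          have := Finset.card_le_card_of_injOn
            (s := Finset.univ.filter fun p => F p = n) (t := Finset.range (n+1))
            (fun p : Fin N × Fin N => (p.1 : ℕ))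
            (by
              intro p hp
              simp only [Finset.mem_coe, Finset.mem_filter, Finset.mem_univ, true_and] at hp
              simp only [Finset.mem_coe, Finset.mem_range]
              have h2 : (p.2 : ℕ) < N := p.2.2
              simp only [hF] at hp
              omega)
            (by
              intro p hp q hq hpq
              simp only [Finset.coe_filter, Set.mem_setOf_eq, Finset.mem_univ,
                true_and] at hp hq
              have h2p : (p.2 : ℕ) < N := p.2.2
              have h2q : (q.2 : ℕ) < N := q.2.2
              simp only [hF] at hp hq
              have hpq' : (p.1 : ℕ) = (q.1 : ℕ) := hpq
              have : (p.2 : ℕ) = (q.2 : ℕ) := by omega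
              exact Prod.ext (Fin.ext hpq') (Fin.ext this))
          simpa using this
        exact_mod_cast hcard
    _ ≤ ∑' n : ℕ, ((n:ℝ)+1) * m ((M:ℤ)+n) := by
        refine hsum.sum_le_tsum _ (fun n _ => ?_)
        have := hm_pos ((M:ℤ)+n)
        positivity

/-- With `|a ν| ≤ C m(ν)`, `m` positive, even and `(1+|ν|)m ∈ ℓ¹`,
the Toeplitz matrix `P_N(j,k) = a^N_{j-k}` (`a^N = 1_{[-N,N]} a`) and its periodized
version `P̃_N(j,k) = ∑_{ν ≡ j-k mod (N+M)} a^N_ν` satisfy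
`‖P_N - P̃_N‖_tr ≤ 2C ∑_{k ≥ M} (k+1-M) m(k)`, uniformly in `N`. -/
theorem statement_3 (N M : ℕ) (hM : 1 ≤ M) (a : ℤ → ℂ) (m : ℤ → ℝ) (C : ℝ)
    (hm_pos : ∀ ν, 0 < m ν) (hm_even : ∀ ν, m (-ν) = m ν)
    (hm_sum : Summable fun ν : ℤ => (1 + |(ν : ℝ)|) * m ν)
    (ha : ∀ ν, ‖a ν‖ ≤ C * m ν)
    (aN : ℤ → ℂ) (haN : ∀ ν : ℤ, aN ν = if |ν| ≤ (N : ℤ) then a ν else 0)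
    (P : Matrix (Fin N) (Fin N) ℂ)
    (hP : ∀ j k : Fin N, P j k = aN ((j : ℤ) - (k : ℤ)))
    (Pt : Matrix (Fin N) (Fin N) ℂ)
    (hPt : ∀ j k : Fin N, Pt j k =
      ∑' ν : ℤ, if (ν : ZMod (N + M)) = (((j : ℤ) - (k : ℤ) : ℤ) : ZMod (N + M))
        then aN ν else 0) :
    traceNorm (P - Pt) ≤ 2 * C * ∑' k : ℕ, ((k : ℝ) + 1) * m ((M : ℤ) + (k : ℤ)) := by
  classical
  have hC : 0 ≤ C := by
    by_contra hneg
    push_neg at hneg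
    have h1 := (norm_nonneg (a 0)).trans (ha 0)
    nlinarith [hm_pos 0]
  have haN0 : ∀ ν : ℤ, ¬ |ν| ≤ (N:ℤ) → aN ν = 0 := by
    intro ν hν
    rw [haN, if_neg hν]
  have hg : ∀ ν : ℤ, ‖aN ν‖ ≤ C * m ν := by
    intro ν
    rw [haN]
    split_ifs with h
    · exact ha ν
    · rw [norm_zero]
      exact mul_nonneg hC (hm_pos ν).le
  -- summability of the majorant
  have hsummable : Summable fun n : ℕ => ((n:ℝ)+1) * m ((M:ℤ) + n) := by
    have hinj : Function.Injective (fun n : ℕ => (M:ℤ) + n) := by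
      intro n₁ n₂ h
      simp only at h
      omega
    have h1 : Summable fun n : ℕ => (1 + |(((M:ℤ) + n : ℤ) : ℝ)|) * m ((M:ℤ) + n) :=
      hm_sum.comp_injective hinj
    refine Summable.of_nonneg_of_le (fun n => ?_) (fun n => ?_) h1
    · have := hm_pos ((M:ℤ)+n)
      positivity
    · refine mul_le_mul_of_nonneg_right ?_ (hm_pos _).le
      rw [abs_of_nonneg (by positivity)]
      push_cast
      have : (1:ℝ) ≤ (M:ℝ) := by exact_mod_cast hM
      linarith
  -- entrywise bound
  have hentry : ∀ j k : Fin N, ‖(P - Pt) j k‖ ≤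
      C * m ((j:ℤ) - (k:ℤ) - ((N:ℤ)+M)) + C * m ((j:ℤ) - (k:ℤ) + ((N:ℤ)+M)) := by
    intro j k
    have hj : (j : ℕ) < N := j.2
    have hk : (k : ℕ) < N := k.2
    have hd1 : -(N:ℤ) < (j:ℤ) - (k:ℤ) := by omega
    have hd2 : (j:ℤ) - (k:ℤ) < (N:ℤ) := by omega
    have hPt' : Pt j k = aN ((j:ℤ) - (k:ℤ) - ((N:ℤ)+M)) + aN ((j:ℤ) - (k:ℤ))
        + aN ((j:ℤ) - (k:ℤ) + ((N:ℤ)+M)) := by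
      rw [hPt]
      exact aux_tsum_eval N M hM aN ((j:ℤ) - (k:ℤ)) hd1 hd2 haN0
    have hdiff : (P - Pt) j k =
        -(aN ((j:ℤ) - (k:ℤ) - ((N:ℤ)+M)) + aN ((j:ℤ) - (k:ℤ) + ((N:ℤ)+M))) := by
      rw [Matrix.sub_apply, hP, hPt']
      ring
    rw [hdiff, norm_neg]
    calc ‖aN ((j:ℤ) - (k:ℤ) - ((N:ℤ)+M)) + aN ((j:ℤ) - (k:ℤ) + ((N:ℤ)+M))‖
        ≤ ‖aN ((j:ℤ) - (k:ℤ) - ((N:ℤ)+M))‖ + ‖aN ((j:ℤ) - (k:ℤ) + ((N:ℤ)+M))‖ :=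
          norm_add_le _ _
      _ ≤ C * m ((j:ℤ) - (k:ℤ) - ((N:ℤ)+M)) + C * m ((j:ℤ) - (k:ℤ) + ((N:ℤ)+M)) :=
          add_le_add (hg _) (hg _)
  -- swap symmetry
  have hswap : (∑ j : Fin N, ∑ k : Fin N, m ((j:ℤ) - (k:ℤ) - ((N:ℤ)+M)))
      = ∑ j : Fin N, ∑ k : Fin N, m ((j:ℤ) - (k:ℤ) + ((N:ℤ)+M)) := by
    rw [Finset.sum_comm]
    refine Finset.sum_congr rfl fun j _ => Finset.sum_congr rfl fun k _ => ?_
    rw [← hm_even ((j:ℤ) - (k:ℤ) + ((N:ℤ)+M))]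
    congr 1
    ring
  calc traceNorm (P - Pt)
      ≤ ∑ j, ∑ k, ‖(P - Pt) j k‖ := traceNorm_le_sum_norm _
    _ ≤ ∑ j : Fin N, ∑ k : Fin N,
          (C * m ((j:ℤ) - (k:ℤ) - ((N:ℤ)+M)) + C * m ((j:ℤ) - (k:ℤ) + ((N:ℤ)+M))) :=
        Finset.sum_le_sum fun j _ => Finset.sum_le_sum fun k _ => hentry j k
    _ = C * (∑ j : Fin N, ∑ k : Fin N, m ((j:ℤ) - (k:ℤ) - ((N:ℤ)+M)))
        + C * (∑ j : Fin N, ∑ k : Fin N, m ((j:ℤ) - (k:ℤ) + ((N:ℤ)+M))) := by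
        simp only [Finset.sum_add_distrib, Finset.mul_sum]
    _ = 2 * C * (∑ j : Fin N, ∑ k : Fin N, m ((j:ℤ) - (k:ℤ) + ((N:ℤ)+M))) := by
        rw [hswap]; ring
    _ ≤ 2 * C * ∑' k : ℕ, ((k : ℝ) + 1) * m ((M : ℤ) + (k : ℤ)) := by
        refine mul_le_mul_of_nonneg_left ?_ (by positivity)
        exact aux_sum_bound N M m hm_pos hsummable
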